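/- arXiv:2006.07696 — 4 statements merged into one kernel-verified Lean document; each statement's English description precedes it below -/
import Mathlib

section
/- Let A : B₁ → B₂ be a bounded linear operator between Banach spaces. If the quotient vector space B₂ / range(A) is finite-dimensional, then the range of A is closed. -/
/-- If, for a bounded linear operator between Banach spaces, the algebraic quotient
of the codomain by the range is finite-dimensional, then the range is closed. -/
theorem stmt_1
    {B₁ B₂ : Type*} [NormedAddCommGroup B₁] [NormedSpace ℝ B₁] [CompleteSpace B₁]
    [NormedAddCommGroup B₂] [NormedSpace ℝ B₂] [CompleteSpace B₂]
    (A : B₁ →L[ℝ] B₂)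
    (h : FiniteDimensional ℝ (B₂ ⧸ LinearMap.range (A : B₁ →ₗ[ℝ] B₂))) :
    IsClosed (Set.range A) := by
  classical
  set p : Submodule ℝ B₂ := LinearMap.range (A : B₁ →ₗ[ℝ] B₂) with hp
  -- choose an algebraic complement q of p; it is finite-dimensional, hence complete
  obtain ⟨q, hq⟩ : ∃ q, IsCompl p q := p.exists_isCompl
  haveI : FiniteDimensional ℝ q := (p.quotientEquivOfIsCompl q hq).finiteDimensional
  haveI : CompleteSpace q := FiniteDimensional.complete ℝ q
  -- lift A through the quotient by its kernel
  set K : Submodule ℝ B₁ := LinearMap.ker (A : B₁ →ₗ[ℝ] B₂) with hK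
  have hKclosed : IsClosed (K : Set B₁) := ContinuousLinearMap.isClosed_ker A
  haveI : IsClosed ((K.toAddSubgroup : AddSubgroup B₁) : Set B₁) := hKclosed
  let Abar : (B₁ ⧸ K) →ₗ[ℝ] B₂ := K.liftQ (A : B₁ →ₗ[ℝ] B₂) le_rfl
  have hAclcont : Continuous Abar := by
    exact (QuotientAddGroup.isQuotientMap_mk K.toAddSubgroup).continuous_iff.mpr A.continuous
  let Acl : (B₁ ⧸ K) →L[ℝ] B₂ := ⟨Abar, hAclcont⟩
  -- the map T : (B₁ ⧸ K) × q → B₂, (u, m) ↦ Acl u + m, is a continuous bijection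
  let T : ((B₁ ⧸ K) × q) →L[ℝ] B₂ := Acl.coprod (q.subtypeL)
  have hAclrange : Acl.range = p := by
    simpa [Acl, Abar] using K.range_liftQ (A : B₁ →ₗ[ℝ] B₂) le_rfl
  have hAclker : Acl.ker = ⊥ := K.ker_liftQ_eq_bot _ _ le_rfl
  have hTsurj : T.range = ⊤ := by
    rw [ContinuousLinearMap.range_coprod, hAclrange, Submodule.range_subtypeL]
    exact hq.sup_eq_top
  have hTinj : T.ker = ⊥ := by
    rw [LinearMap.ker_eq_bot']
    rintro ⟨u, m⟩ hum
    have h0 : Acl u + (m : B₂) = 0 := hum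
    have hmpq : (m : B₂) ∈ p ⊓ q := by
      refine ⟨?_, m.2⟩
      have hm' : (m : B₂) = -(Acl u) := by
        rw [eq_neg_iff_add_eq_zero, add_comm]; exact h0
      rw [hm']
      exact p.neg_mem (hAclrange ▸ LinearMap.mem_range_self Acl.toLinearMap u)
    have hm0 : (m : B₂) = 0 := by
      have := hq.inf_eq_bot ▸ hmpq
      simpa using this
    have hu0 : Acl u = 0 := by rw [← h0, hm0, add_zero]
    have : u = 0 := by
      have := hAclker ▸ (LinearMap.mem_ker.mpr hu0)
      simpa using this
    exact Prod.ext this (Subtype.ext hm0)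
  -- by the open mapping theorem, T is a continuous linear equivalence
  let e := ContinuousLinearEquiv.ofBijective T hTinj hTsurj
  -- range A is the preimage of {0} under the continuous map y ↦ (e.symm y).2
  have key : Set.range A = (fun y : B₂ => (e.symm y).2) ⁻¹' {0} := by
    ext y
    constructor
    · rintro ⟨x, rfl⟩
      have : e (Submodule.Quotient.mk x, 0) = A x := by
        show T (Submodule.Quotient.mk x, 0) = A x
        simp [T, Acl, Abar]
      have he : e.symm (A x) = (Submodule.Quotient.mk x, 0) := by
        rw [← this, ContinuousLinearEquiv.symm_apply_apply]
      simp [he]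
    · intro hy
      have hy2 : (e.symm y).2 = 0 := hy
      have : e ((e.symm y).1, 0) = y := by
        conv_rhs => rw [← e.apply_symm_apply y]
        congr 1
        exact Prod.ext rfl hy2.symm
      have : Acl (e.symm y).1 = y := by
        rw [← this]; show Acl _ = T _; simp [T]
      rw [← this]
      have : Acl (e.symm y).1 ∈ p := hAclrange ▸ LinearMap.mem_range_self Acl.toLinearMap _
      exact this
  rw [key]
  exact isClosed_singleton.preimage (continuous_snd.comp e.symm.continuous)
end

section
/- Let E be a Banach space such that E ⊕ E is isomorphic (as Banach spaces) to E. Then there is no unital linear action of the algebra L(E) of bounded operators on E on any nonzero finite-dimensional vector space; i.e., any algebra homomorphism from L(E) to L(V) with V finite-dimensional and nonzero fails to send the identity I_E to I_V. -/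
/-- If a Banach space `E` satisfies `E ⊕ E ≅ E` (Banach space isomorphism), then there is
no unital multiplicative linear action of the algebra `L(E)` of bounded operators on any
nonzero finite-dimensional vector space `V`: every linear multiplicative map
`L(E) → End(V)` fails to send the identity to the identity. -/
theorem stmt_10
    {E : Type*} [NormedAddCommGroup E] [NormedSpace ℝ E] [CompleteSpace E]
    (hiso : Nonempty ((E × E) ≃L[ℝ] E))
    (V : Type*) [AddCommGroup V] [Module ℝ V] [FiniteDimensional ℝ V] [Nontrivial V]
    (ρ : (E →L[ℝ] E) →ₗ[ℝ] Module.End ℝ V)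
    (hmul : ∀ A B : E →L[ℝ] E, ρ (A * B) = ρ A * ρ B) :
    ρ 1 ≠ 1 := by
  intro h
  obtain ⟨φ⟩ := hiso
  set A₁ : E →L[ℝ] E := (φ : (E × E) →L[ℝ] E).comp (ContinuousLinearMap.inl ℝ E E) with hA₁
  set A₂ : E →L[ℝ] E := (φ : (E × E) →L[ℝ] E).comp (ContinuousLinearMap.inr ℝ E E) with hA₂
  set B₁ : E →L[ℝ] E := (ContinuousLinearMap.fst ℝ E E).comp (φ.symm : E →L[ℝ] (E × E))
    with hB₁
  set B₂ : E →L[ℝ] E := (ContinuousLinearMap.snd ℝ E E).comp (φ.symm : E →L[ℝ] (E × E))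
    with hB₂
  have e1 : B₁ * A₁ = 1 := by
    ext x
    simp [hA₁, hB₁, ContinuousLinearMap.mul_apply]
  have e2 : B₂ * A₂ = 1 := by
    ext x
    simp [hA₂, hB₂, ContinuousLinearMap.mul_apply]
  have e3 : A₁ * B₁ + A₂ * B₂ = 1 := by
    ext x
    have : φ ((φ.symm x).1, 0) + φ (0, (φ.symm x).2) = x := by
      rw [← map_add]
      simp
    simpa [hA₁, hA₂, hB₁, hB₂, ContinuousLinearMap.mul_apply] using this
  set tr := LinearMap.trace ℝ V
  have key : ∀ A B : E →L[ℝ] E, tr (ρ (A * B)) = tr (ρ (B * A)) := by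
    intro A B
    rw [hmul, hmul, LinearMap.trace_mul_comm]
  set c : ℝ := tr (ρ 1) with hc
  have h1 : tr (ρ (A₁ * B₁)) = c := by rw [key, e1]
  have h2 : tr (ρ (A₂ * B₂)) = c := by rw [key, e2]
  have hsum : c + c = c := by
    conv_rhs => rw [hc, ← e3, map_add, map_add]
    rw [h1, h2]
  have hc0 : c = 0 := by linarith
  have : c = (Module.finrank ℝ V : ℝ) := by
    rw [hc, h, LinearMap.trace_one]
  have : (Module.finrank ℝ V : ℝ) = 0 := by rw [← this, hc0]
  have : Module.finrank ℝ V = 0 := by exact_mod_cast this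
  have := Module.finrank_pos (R := ℝ) (M := V)
  omega
end

section
/- Let E be a Banach space with complementary closed subspaces E₁, E₂ (so E = E₁ ⊕ E₂ with bounded projections P₁, P₂, P₁ + P₂ = I), each of E₁, E₂ isomorphic to E. Let ρ : L(E) → End(V) be a unital algebra homomorphism into the endomorphisms of a finite-dimensional vector space V. Then for any bounded isomorphism τ : E → E₁ (viewed as τ : E → E composed with inclusion), ρ(τ⁻¹P₁)∘ρ(τ) = id_V implies ρ(τ)∘ρ(τ⁻¹P₁) = id_V, and consequently ρ(P₂) = 0, ρ(P₁) = 0, and id_V = ρ(P₁) + ρ(P₂) = 0, a contradiction unless V = 0. -/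
/-- Let `P₁, P₂` be bounded projections on a Banach space `E` with `P₁ + P₂ = I`, whose
ranges `E₁, E₂` are each isomorphic to `E`: there are operators `τ, τ' : E → E`
(isomorphisms onto `E₁`, `E₂`) with left inverses `τ₁ = τ⁻¹P₁`, `τ'₁ = τ'⁻¹P₂`, so that
`τ₁τ = 1`, `ττ₁ = P₁`, `τ'₁τ' = 1`, `τ'τ'₁ = P₂`. If `ρ : L(E) → End(V)` is a unital
multiplicative linear map into the endomorphisms of a finite-dimensional vector space
`V`, then (since in `End(V)` a left inverse is a right inverse) `ρ(τ)ρ(τ₁) = 1`, hence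
`ρ(P₁) = 0` and `ρ(P₂) = 0`, so `id_V = ρ(P₁) + ρ(P₂) = 0` and `V = 0`. -/
theorem stmt_11
    {E : Type*} [NormedAddCommGroup E] [NormedSpace ℝ E] [CompleteSpace E]
    (P₁ P₂ τ τ₁ τ' τ'₁ : E →L[ℝ] E)
    (hsum : P₁ + P₂ = 1)
    (hproj₁ : P₁ * P₁ = P₁) (hproj₂ : P₂ * P₂ = P₂)
    (hleft : τ₁ * τ = 1) (hright : τ * τ₁ = P₁)
    (hleft' : τ'₁ * τ' = 1) (hright' : τ' * τ'₁ = P₂)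
    (V : Type*) [AddCommGroup V] [Module ℝ V] [FiniteDimensional ℝ V]
    (ρ : (E →L[ℝ] E) →ₗ[ℝ] Module.End ℝ V)
    (hmul : ∀ A B : E →L[ℝ] E, ρ (A * B) = ρ A * ρ B)
    (hone : ρ 1 = 1) :
    (ρ τ * ρ τ₁ = 1) ∧ ρ P₁ = 0 ∧ ρ P₂ = 0 ∧ Subsingleton V := by
  have h1 : ρ τ₁ * ρ τ = 1 := by rw [← hmul, hleft, hone]
  have h2 : ρ τ * ρ τ₁ = 1 := mul_eq_one_comm.mp h1
  have hP1 : ρ P₁ = 1 := by rw [← hright, hmul, h2]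
  have h1' : ρ τ'₁ * ρ τ' = 1 := by rw [← hmul, hleft', hone]
  have h2' : ρ τ' * ρ τ'₁ = 1 := mul_eq_one_comm.mp h1'
  have hP2 : ρ P₂ = 1 := by rw [← hright', hmul, h2']
  have hsum' : ρ P₁ + ρ P₂ = 1 := by rw [← map_add, hsum, hone]
  have hzero : (1 : Module.End ℝ V) = 0 := by
    have h := hsum'
    rw [hP1, hP2] at h
    exact add_eq_left.mp h
  have hsub : Subsingleton V := by
    refine ⟨fun a b => ?_⟩
    have ha : a = 0 := by
      have := LinearMap.ext_iff.mp hzero a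
      simpa using this
    have hb : b = 0 := by
      have := LinearMap.ext_iff.mp hzero b
      simpa using this
    rw [ha, hb]
  haveI := hsub
  refine ⟨h2, ?_, ?_, hsub⟩ <;> exact Subsingleton.elim _ _
end

section
/- For finite-dimensional Hilbert spaces, Enflo's doubling construction preserves the quasi-additivity estimate: let h : ℓ²(m) → ℓ²(m) be homogeneous and satisfy ‖Σᵢ h(xᵢ)‖ ≤ Σᵢ ‖xᵢ‖ for every finite collection x₁,…,x_r with Σᵢ xᵢ = 0. Define Δh : ℓ²(m) × ℓ²(m) → ℓ²(m) × ℓ²(m) × ℓ²(m) ≅ ℓ²(2m)→ℓ²(3m)-type map by Δh(x,y) := (h(x), h(y), x‖y‖/√(‖x‖²+‖y‖²)) (with the last coordinate 0 when x = y = 0). Then Δh also satisfies ‖Σᵢ Δh(zᵢ)‖ ≤ Σᵢ ‖zᵢ‖ for every finite collection z₁,…,z_r in ℓ²(m) × ℓ²(m) with Σᵢ zᵢ = 0. -/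
/-- Key scalar inequality. -/
lemma enflo_key {r : ℕ} (a b s : Fin r → ℝ) (ha : ∀ i, 0 ≤ a i) (hb : ∀ i, 0 ≤ b i)
    (hs : ∀ i, 0 ≤ s i) (hsq : ∀ i, s i ^ 2 = a i ^ 2 + b i ^ 2) :
    (∑ i, |b i / s i - (∑ j, b j) / (∑ j, s j)| * a i) ^ 2
      ≤ (∑ i, s i) ^ 2 - (∑ i, a i) ^ 2 - (∑ i, b i) ^ 2 := by
  have hzero : ∀ i, s i = 0 → a i = 0 ∧ b i = 0 := by
    intro i h0
    have := hsq i
    rw [h0] at this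
    constructor <;> nlinarith [sq_nonneg (a i), sq_nonneg (b i)]
  by_cases hS : ∑ j, s j = 0
  · have hall : ∀ i ∈ Finset.univ, s i = 0 :=
      (Finset.sum_eq_zero_iff_of_nonneg (fun i _ => hs i)).mp hS
    have ha0 : ∀ i, a i = 0 := fun i => (hzero i (hall i (Finset.mem_univ i))).1
    have hb0 : ∀ i, b i = 0 := fun i => (hzero i (hall i (Finset.mem_univ i))).2
    simp [hS, ha0, hb0]
  have hSpos : 0 < ∑ j, s j :=
    lt_of_le_of_ne (Finset.sum_nonneg fun i _ => hs i) (Ne.symm hS)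
  set S := ∑ j, s j with hSdef
  set B := ∑ j, b j with hBdef
  set A := ∑ j, a j with hAdef
  set t := B / S with htdef
  set c : Fin r → ℝ := fun i => b i / s i with hcdef
  -- pointwise facts
  have hcs : ∀ i, c i * s i = b i := by
    intro i
    rcases eq_or_lt_of_le (hs i) with h0 | h0
    · simp [hcdef, ← h0, (hzero i h0.symm).2]
    · exact div_mul_cancel₀ _ (ne_of_gt h0)
  have hash : ∀ i, a i / Real.sqrt (s i) * Real.sqrt (s i) = a i := by
    intro i
    rcases eq_or_lt_of_le (hs i) with h0 | h0
    · simp [← h0, (hzero i h0.symm).1]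
    · exact div_mul_cancel₀ _ (ne_of_gt (Real.sqrt_pos.mpr h0))
  have hsqrt_sq : ∀ i, Real.sqrt (s i) ^ 2 = s i := fun i => Real.sq_sqrt (hs i)
  -- Cauchy-Schwarz 1 : A^2 ≤ (∑ a i ^2 / s i) * S
  have CS1 : A ^ 2 ≤ (∑ i, a i ^ 2 / s i) * S := by
    have := Finset.sum_mul_sq_le_sq_mul_sq Finset.univ
      (fun i => a i / Real.sqrt (s i)) (fun i => Real.sqrt (s i))
    simp only [div_pow, hsqrt_sq, hash] at this
    exact this
  -- Cauchy-Schwarz 2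
  have CS2 : (∑ i, |c i - t| * a i) ^ 2 ≤ (∑ i, (c i - t) ^ 2 * (a i ^ 2 / s i)) * S := by
    have := Finset.sum_mul_sq_le_sq_mul_sq Finset.univ
      (fun i => |c i - t| * (a i / Real.sqrt (s i))) (fun i => Real.sqrt (s i))
    simp only [hsqrt_sq] at this
    have e1 : ∀ i, |c i - t| * (a i / Real.sqrt (s i)) * Real.sqrt (s i) = |c i - t| * a i := by
      intro i; rw [mul_assoc, hash]
    have e2 : ∀ i, (|c i - t| * (a i / Real.sqrt (s i))) ^ 2 = (c i - t) ^ 2 * (a i ^ 2 / s i) := by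
      intro i; rw [mul_pow, sq_abs, div_pow, hsqrt_sq]
    simp only [e1, e2, hsqrt_sq] at this
    exact this
  -- middle bound : a i ^2 / s i ≤ s i
  have hmid : (∑ i, (c i - t) ^ 2 * (a i ^ 2 / s i)) ≤ ∑ i, (c i - t) ^ 2 * s i := by
    apply Finset.sum_le_sum
    intro i _
    apply mul_le_mul_of_nonneg_left _ (sq_nonneg _)
    rcases eq_or_lt_of_le (hs i) with h0 | h0
    · simp [← h0, (hzero i h0.symm).1]
    · rw [div_le_iff₀ h0]
      nlinarith [hsq i, sq_nonneg (b i)]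
  -- identity: ∑ (c i - t)^2 * s i = ∑ c i ^2 * s i - B^2/S
  have hvar : (∑ i, (c i - t) ^ 2 * s i) = (∑ i, c i ^ 2 * s i) - B ^ 2 / S := by
    have expand : ∀ i, (c i - t) ^ 2 * s i = c i ^ 2 * s i - 2 * t * (c i * s i) + t ^ 2 * s i := by
      intro i; ring
    rw [Finset.sum_congr rfl (fun i _ => expand i)]
    rw [Finset.sum_add_distrib, Finset.sum_sub_distrib, ← Finset.mul_sum, ← Finset.mul_sum]
    rw [Finset.sum_congr rfl (fun i _ => hcs i)]
    rw [← hBdef, ← hSdef, htdef]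
    field_simp
    ring
  -- c i ^2 * s i = s i - a i^2 / s i
  have hcc : ∀ i, c i ^ 2 * s i = s i - a i ^ 2 / s i := by
    intro i
    rcases eq_or_lt_of_le (hs i) with h0 | h0
    · simp [hcdef, ← h0]
    · have hne := ne_of_gt h0
      field_simp [hcdef]
      rw [← mul_pow, hcs i]; linarith [hsq i]
  have hsum2 : (∑ i, c i ^ 2 * s i) = S - ∑ i, a i ^ 2 / s i := by
    rw [Finset.sum_congr rfl (fun i _ => hcc i), Finset.sum_sub_distrib]
  -- combine
  have final : (∑ i, (c i - t) ^ 2 * (a i ^ 2 / s i)) * S ≤ S ^ 2 - A ^ 2 - B ^ 2 := by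
    have h1 : (∑ i, (c i - t) ^ 2 * (a i ^ 2 / s i)) * S ≤
        (S - (∑ i, a i ^ 2 / s i) - B ^ 2 / S) * S := by
      apply mul_le_mul_of_nonneg_right _ (le_of_lt hSpos)
      calc (∑ i, (c i - t) ^ 2 * (a i ^ 2 / s i)) ≤ ∑ i, (c i - t) ^ 2 * s i := hmid
        _ = S - (∑ i, a i ^ 2 / s i) - B ^ 2 / S := by rw [hvar, hsum2]
    calc (∑ i, (c i - t) ^ 2 * (a i ^ 2 / s i)) * S
        ≤ (S - (∑ i, a i ^ 2 / s i) - B ^ 2 / S) * S := h1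
      _ = S ^ 2 - (∑ i, a i ^ 2 / s i) * S - B ^ 2 := by field_simp
      _ ≤ S ^ 2 - A ^ 2 - B ^ 2 := by linarith [CS1]
  calc (∑ i, |c i - t| * a i) ^ 2 ≤ (∑ i, (c i - t) ^ 2 * (a i ^ 2 / s i)) * S := CS2
    _ ≤ S ^ 2 - A ^ 2 - B ^ 2 := final


/-- Enflo's doubling construction preserves the quasi-additivity estimate with constant 1.
If `h : ℓ²(m) → ℓ²(m)` is homogeneous and satisfies `‖Σ h(xᵢ)‖ ≤ Σ ‖xᵢ‖` for all finite
collections with `Σ xᵢ = 0`, then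
`Δh(x,y) := (h x, h y, (‖y‖/√(‖x‖²+‖y‖²)) • x)` satisfies the same estimate, where the
domain `ℓ²(m) × ℓ²(m)` carries the ℓ²-product norm `√(‖x‖²+‖y‖²)` and the codomain
triple carries the ℓ² norm `√(‖a‖²+‖b‖²+‖c‖²)` (spelled out explicitly below). -/
theorem stmt_12 {m : ℕ}
    (h : EuclideanSpace ℝ (Fin m) → EuclideanSpace ℝ (Fin m))
    (hhomog : ∀ (c : ℝ) (x : EuclideanSpace ℝ (Fin m)), h (c • x) = c • h x)
    (hquasi : ∀ (r : ℕ) (x : Fin r → EuclideanSpace ℝ (Fin m)),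
      (∑ i, x i = 0) → ‖∑ i, h (x i)‖ ≤ ∑ i, ‖x i‖) :
    ∀ (r : ℕ) (z : Fin r → EuclideanSpace ℝ (Fin m) × EuclideanSpace ℝ (Fin m)),
      (∑ i, z i = 0) →
      Real.sqrt (‖∑ i, h (z i).1‖ ^ 2 + ‖∑ i, h (z i).2‖ ^ 2 +
          ‖∑ i, (‖(z i).2‖ / Real.sqrt (‖(z i).1‖ ^ 2 + ‖(z i).2‖ ^ 2)) • (z i).1‖ ^ 2) ≤
        ∑ i, Real.sqrt (‖(z i).1‖ ^ 2 + ‖(z i).2‖ ^ 2) := by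
  intro r z hz
  set x : Fin r → EuclideanSpace ℝ (Fin m) := fun i => (z i).1 with hxdef
  set y : Fin r → EuclideanSpace ℝ (Fin m) := fun i => (z i).2 with hydef
  set a : Fin r → ℝ := fun i => ‖x i‖ with hadef
  set b : Fin r → ℝ := fun i => ‖y i‖ with hbdef
  set s : Fin r → ℝ := fun i => Real.sqrt (a i ^ 2 + b i ^ 2) with hsdef
  have hx0 : ∑ i, x i = 0 := by
    have := congrArg Prod.fst hz
    rw [Prod.fst_sum] at this
    simpa using this
  have hy0 : ∑ i, y i = 0 := by
    have := congrArg Prod.snd hz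
    rw [Prod.snd_sum] at this
    simpa using this
  have hs_nonneg : ∀ i, 0 ≤ s i := fun i => Real.sqrt_nonneg _
  have hs_sq : ∀ i, s i ^ 2 = a i ^ 2 + b i ^ 2 := fun i =>
    Real.sq_sqrt (by positivity)
  have hA : ‖∑ i, h (x i)‖ ≤ ∑ i, a i := hquasi r x hx0
  have hB : ‖∑ i, h (y i)‖ ≤ ∑ i, b i := hquasi r y hy0
  set t : ℝ := (∑ j, b j) / (∑ j, s j) with htdef
  have hC : ‖∑ i, (b i / s i) • x i‖ ≤ ∑ i, |b i / s i - t| * a i := by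
    have hsum : ∑ i, (b i / s i) • x i = ∑ i, (b i / s i - t) • x i := by
      rw [Finset.sum_congr rfl
        (fun i _ => sub_smul (b i / s i) t (x i))]
      rw [Finset.sum_sub_distrib, ← Finset.smul_sum, hx0, smul_zero, sub_zero]
    rw [hsum]
    calc ‖∑ i, (b i / s i - t) • x i‖ ≤ ∑ i, ‖(b i / s i - t) • x i‖ :=
          norm_sum_le _ _
      _ = ∑ i, |b i / s i - t| * a i := by
          apply Finset.sum_congr rfl
          intro i _
          rw [norm_smul, Real.norm_eq_abs]
  have key := enflo_key a b s (fun i => norm_nonneg _) (fun i => norm_nonneg _)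
    hs_nonneg hs_sq
  have hSnn : 0 ≤ ∑ i, s i := Finset.sum_nonneg fun i _ => hs_nonneg i
  have hEle : ‖∑ i, h (x i)‖ ^ 2 + ‖∑ i, h (y i)‖ ^ 2 + ‖∑ i, (b i / s i) • x i‖ ^ 2
      ≤ (∑ i, s i) ^ 2 := by
    have h1 : ‖∑ i, h (x i)‖ ^ 2 ≤ (∑ i, a i) ^ 2 :=
      pow_le_pow_left₀ (norm_nonneg _) hA 2
    have h2 : ‖∑ i, h (y i)‖ ^ 2 ≤ (∑ i, b i) ^ 2 :=
      pow_le_pow_left₀ (norm_nonneg _) hB 2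
    have h3 : ‖∑ i, (b i / s i) • x i‖ ^ 2 ≤ (∑ i, |b i / s i - t| * a i) ^ 2 :=
      pow_le_pow_left₀ (norm_nonneg _) hC 2
    linarith
  calc Real.sqrt (‖∑ i, h (x i)‖ ^ 2 + ‖∑ i, h (y i)‖ ^ 2 + ‖∑ i, (b i / s i) • x i‖ ^ 2)
      ≤ Real.sqrt ((∑ i, s i) ^ 2) := Real.sqrt_le_sqrt hEle
    _ = ∑ i, s i := Real.sqrt_sq hSnn
end
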